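/- Let p be an odd prime with p ∉ S, and let s, w ∈ ℂ with Re s > 15/16 and Re w > 2k − 17/16. Writing x = p^{−s}, y = p^{−w}, z = p^{2k−1}, the series F_p(s,w) converges absolutely and F_p(s,w) = (1 + xy + xyz + xy² + xy²z + xy²z² + xy³z + xy³z² + x²y⁴z²) / ((1 − x)(1 − xy³)(1 − xy³z³)) − xy(1+z) / ((1 − xy²)(1 − xy²z²)). -/

import Mathlib

open scoped BigOperators Classical
open Filter Asymptotics

noncomputable section

/-- Value of the multiplicative function `r*_{4k}` at the prime power `p^l`. -/
def rstarPP (k p l : ℕ) : ℝ :=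
  if p = 2 ∧ 1 ≤ l then
    (1 - (-1 : ℝ)^k / (1 - 2^(2*k-1))) * 2^(l*(2*k-1))
      - (-1 : ℝ)^k * (1 - 2^(2*k)) / (1 - 2^(2*k-1))
  else (1 - (p : ℝ)^((l+1)*(2*k-1))) / (1 - (p : ℝ)^(2*k-1))

/-- The multiplicative function `r*_{4k}`, given by its values on prime powers. -/
def rstar (k n : ℕ) : ℝ := n.factorization.prod (fun p l => rstarPP k p l)

/-- The indicator function `1_S` of rationals having no `p`-adic valuation equal to `1`
outside of `S`. -/
def oneS (S : Finset ℕ) (q : ℚ) : ℝ :=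
  if ∀ p : ℕ, p.Prime → p ∉ S → padicValRat p q ≠ 1 then 1 else 0

/-- `r_{4k}(d)`: the number of representations of `d` as a sum of `4k` squares. -/
def rquad (k d : ℕ) : ℕ :=
  Set.ncard {y : Fin (4*k) → ℤ | ∑ i, (y i)^2 = (d : ℤ)}

/-- The divisor sum `S(X,Y)`. -/
def Ssum (k : ℕ) (S : Finset ℕ) (X Y : ℝ) : ℝ :=
  ∑ n ∈ Finset.Icc 1 ⌊X⌋₊, ∑ d ∈ (n^3).divisors.filter (fun d : ℕ => (d : ℝ) ≤ Y),
    rstar k d * oneS S ((n : ℚ)^2 / (d : ℚ))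

/-- The divisor sum `T(B)`. -/
def Tsum (k : ℕ) (S : Finset ℕ) (B : ℝ) : ℝ :=
  ∑ n ∈ Finset.Icc 1 ⌊B⌋₊, ∑ d ∈ (n^3).divisors.filter (fun d : ℕ => (d : ℝ) ≤ (n : ℝ)^3 / B),
    rstar k d * oneS S ((n : ℚ)^2 / (d : ℚ))

/-- `M(X,Y) = ∫₀^X ∫₀^Y S(x,y) dy dx`. -/
def Msum (k : ℕ) (S : Finset ℕ) (X Y : ℝ) : ℝ :=
  ∫ x in (0:ℝ)..X, ∫ y in (0:ℝ)..Y, Ssum k S x y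

/-- Second difference `𝒟f(X₁,X₂;Y₁,Y₂)`. -/
def DD (f : ℝ → ℝ → ℝ) (X₁ X₂ Y₁ Y₂ : ℝ) : ℝ :=
  f X₁ Y₁ + f X₂ Y₂ - f X₁ Y₂ - f X₂ Y₁

/-- The counting function `N*(B)` (no coprimality condition). -/
def Nstar (k : ℕ) (S : Finset ℕ) (B : ℝ) : ℕ :=
  Set.ncard {P : ℤ × (Fin (4*k) → ℤ) × ℤ |
    P.1 ≠ 0 ∧ P.1^3 = (∑ i, (P.2.1 i)^2) * P.2.2 ∧
    max (max |(P.1 : ℝ)| (Real.sqrt (∑ i, ((P.2.1 i : ℝ))^2))) |(P.2.2 : ℝ)| ≤ B ∧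
    ∀ p : ℕ, p.Prime → p ∉ S →
      (padicValInt p P.2.2 : ℤ) - (padicValInt p P.1 : ℤ) ≠ 1}

/-- The counting function `N(B)` of semi-integral points. -/
def Ncount (k : ℕ) (S : Finset ℕ) (B : ℝ) : ℕ :=
  Set.ncard {P : ℤ × (Fin (4*k) → ℤ) × ℤ |
    Int.gcd P.1 ((Int.gcd (Finset.univ.gcd P.2.1) P.2.2 : ℕ) : ℤ) = 1 ∧
    P.1 ≠ 0 ∧ P.1^3 = (∑ i, (P.2.1 i)^2) * P.2.2 ∧
    max (max |(P.1 : ℝ)| (Real.sqrt (∑ i, ((P.2.1 i : ℝ))^2))) |(P.2.2 : ℝ)| ≤ B ∧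
    ∀ p : ℕ, p.Prime → p ∉ S →
      (padicValInt p P.2.2 : ℤ) - (padicValInt p P.1 : ℤ) ≠ 1}

/-- The `a`-th term of the local series `F_p(s,w)`. -/
def FpTerm (k : ℕ) (S : Finset ℕ) (p : ℕ) (s w : ℂ) (a : ℕ) : ℂ :=
  if p ∈ S then
    (p : ℂ)^(-(a : ℂ) * s) *
      ∑ b ∈ Finset.range (3*a+1), (p : ℂ)^(-(b : ℂ) * w) * (rstar k (p^b) : ℂ)
  else
    (p : ℂ)^(-(a : ℂ) * s) *
      ∑ b ∈ (Finset.range (3*a+1)).filter (fun b : ℕ => (b : ℤ) ≠ 2*(a : ℤ) - 1),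
        (p : ℂ)^(-(b : ℂ) * w) * (rstar k (p^b) : ℂ)

/-- The local series `F_p(s,w)`. -/
def Fp (k : ℕ) (S : Finset ℕ) (p : ℕ) (s w : ℂ) : ℂ := ∑' a : ℕ, FpTerm k S p s w a

/-- The local factor `G_p(s,w)`. -/
def Gp (k : ℕ) (S : Finset ℕ) (p : ℕ) (s w : ℂ) : ℂ :=
  (1 - (p : ℂ)^(-s)) * (1 - (p : ℂ)^(-(s + 2*(w - 2*(k : ℂ) + 1)))) *
    (1 - (p : ℂ)^(-(s + 3*(w - 2*(k : ℂ) + 1)))) * Fp k S p s w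

/-- The Euler product `G_S(s,w)`. -/
def GS (k : ℕ) (S : Finset ℕ) (s w : ℂ) : ℂ :=
  ∏' p : Nat.Primes, Gp k S (p : ℕ) s w

/-- The double Dirichlet series `F(s,w)`. -/
def Ffun (k : ℕ) (S : Finset ℕ) (s w : ℂ) : ℂ :=
  ∑' n : ℕ, ∑ d ∈ (n^3).divisors,
    (rstar k d : ℂ) * (oneS S ((n : ℚ)^2 / (d : ℚ)) : ℂ) * (n : ℂ)^(-s) * (d : ℂ)^(-w)

/-- The local series `F_p(1, 2k-1)` (real-valued). -/
def FpOne (k : ℕ) (S : Finset ℕ) (p : ℕ) : ℝ :=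
  if p ∈ S then
    ∑' a : ℕ, ((p : ℝ)^a)⁻¹ *
      ∑ b ∈ Finset.range (3*a+1), ((p : ℝ)^(b*(2*k-1)))⁻¹ * rstar k (p^b)
  else
    ∑' a : ℕ, ((p : ℝ)^a)⁻¹ *
      ∑ b ∈ (Finset.range (3*a+1)).filter (fun b : ℕ => (b : ℤ) ≠ 2*(a : ℤ) - 1),
        ((p : ℝ)^(b*(2*k-1)))⁻¹ * rstar k (p^b)

/-- The constant `𝔠 = ∏_p (1-1/p)³ F_p(1,2k-1)`. -/
def cConst (k : ℕ) (S : Finset ℕ) : ℝ :=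
  ∏' p : Nat.Primes, (1 - ((p : ℕ) : ℝ)⁻¹)^3 * FpOne k S (p : ℕ)

set_option maxHeartbeats 2000000 in
/-- Euler factor at an odd prime `p ∉ S`: absolute convergence and rational expression
for `F_p(s,w)` with `x = p^{-s}`, `y = p^{-w}`, `z = p^{2k-1}`. -/
theorem Fp_eq_of_not_mem (k : ℕ) (hk : 0 < k) (S : Finset ℕ) (hS : ∀ p ∈ S, p.Prime)
    (p : ℕ) (hp : p.Prime) (hp2 : p ≠ 2) (hpS : p ∉ S) (s w : ℂ)
    (hs : 15/16 < s.re) (hw : 2 * (k : ℝ) - 17/16 < w.re)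
    (x y z : ℂ) (hx : x = (p : ℂ)^(-s)) (hy : y = (p : ℂ)^(-w))
    (hz : z = ((p : ℂ))^(2*k-1)) :
    Summable (FpTerm k S p s w) ∧
    Fp k S p s w =
      (1 + x*y + x*y*z + x*y^2 + x*y^2*z + x*y^2*z^2 + x*y^3*z + x*y^3*z^2 + x^2*y^4*z^2) /
        ((1 - x) * (1 - x*y^3) * (1 - x*y^3*z^3)) -
      x*y*(1 + z) / ((1 - x*y^2) * (1 - x*y^2*z^2)) := by
  classical
  -- basic facts about p
  have hp3 : 3 ≤ p := by have := hp.two_le; omega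
  have hpR : (1:ℝ) < (p:ℝ) := by exact_mod_cast hp.one_lt
  have hpR0 : (0:ℝ) < (p:ℝ) := by linarith
  have hk1 : (1:ℝ) ≤ (k:ℝ) := by exact_mod_cast hk
  have hE : ((2*k-1 : ℕ) : ℝ) = 2*(k:ℝ) - 1 := by
    rw [Nat.cast_sub (by omega)]; push_cast; ring
  -- norms
  have hnx : ‖x‖ = (p:ℝ) ^ (-s.re) := by
    rw [hx, Complex.norm_natCast_cpow_of_pos hp.pos]; simp
  have hny : ‖y‖ = (p:ℝ) ^ (-w.re) := by
    rw [hy, Complex.norm_natCast_cpow_of_pos hp.pos]; simp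
  have hnz : ‖z‖ = (p:ℝ) ^ (((2*k-1:ℕ)):ℝ) := by
    rw [hz, norm_pow, Complex.norm_natCast, Real.rpow_natCast]
  have key : ∀ (m n : ℕ), -s.re + (-w.re)*(m:ℝ) + ((2*k-1:ℕ):ℝ)*(n:ℝ) < 0 →
      ‖x * y^m * z^n‖ < 1 := by
    intro m n h
    have hnorm : ‖x * y^m * z^n‖ = (p:ℝ) ^ (-s.re + (-w.re)*(m:ℝ) + ((2*k-1:ℕ):ℝ)*(n:ℝ)) := by
      rw [norm_mul, norm_mul, norm_pow, norm_pow, hnx, hny, hnz,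
          ← Real.rpow_natCast ((p:ℝ) ^ (-w.re)) m, ← Real.rpow_natCast ((p:ℝ) ^ (((2*k-1:ℕ)):ℝ)) n,
          ← Real.rpow_mul hpR0.le, ← Real.rpow_mul hpR0.le,
          ← Real.rpow_add hpR0, ← Real.rpow_add hpR0]
    rw [hnorm]
    exact Real.rpow_lt_one_of_one_lt_of_neg hpR h
  have hnx1 : ‖x‖ < 1 := by
    have := key 0 0 (by push_cast; linarith)
    simpa using this
  have h2 : ‖x * y^3‖ < 1 := by
    have := key 3 0 (by rw [hE]; push_cast; linarith)
    simpa using this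
  have h3 : ‖x * y^3 * z^3‖ < 1 := key 3 3 (by rw [hE]; push_cast; linarith)
  have h4 : ‖x * y^2‖ < 1 := by
    have := key 2 0 (by rw [hE]; push_cast; linarith)
    simpa using this
  have h5 : ‖x * y^2 * z^2‖ < 1 := key 2 2 (by rw [hE]; push_cast; linarith)
  -- nonvanishing
  have hne : ∀ u : ℂ, ‖u‖ < 1 → 1 - u ≠ 0 := by
    intro u hu he
    rw [sub_eq_zero] at he
    rw [← he] at hu
    simp at hu
  have hzgt : (1:ℝ) < ‖z‖ := by
    rw [hz, norm_pow, Complex.norm_natCast]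
    exact one_lt_pow₀ hpR (by omega)
  have hzne : z - 1 ≠ 0 := by
    intro h
    rw [sub_eq_zero] at h
    rw [h] at hzgt
    simp at hzgt
  have hy0 : y ≠ 0 := by
    refine norm_ne_zero_iff.mp ?_
    rw [hny]
    positivity
  -- the function g
  set gb : ℕ → ℂ := fun b => y^b * ((z^(b+1) - 1)/(z - 1)) with hgb
  -- rstar at prime powers
  have hrstar : ∀ b : ℕ, (rstar k (p^b) : ℂ) = (z^(b+1) - 1)/(z - 1) := by
    intro b
    have hpow1 : (1:ℝ) < (p:ℝ)^(2*k-1) := one_lt_pow₀ hpR (by omega)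
    have h0 : rstarPP k p 0 = 1 := by
      rw [rstarPP, if_neg (by simp)]
      simp only [zero_add, one_mul]
      exact div_self (by linarith)
    have hb : rstar k (p^b) = (1 - (p:ℝ)^((b+1)*(2*k-1)))/(1 - (p:ℝ)^(2*k-1)) := by
      rw [rstar, hp.factorization_pow, Finsupp.prod_single_index h0, rstarPP,
        if_neg (fun h => hp2 h.1)]
    rw [hb]
    push_cast
    rw [pow_mul', ← hz,
      show (1 - z^(b+1)) = -(z^(b+1) - 1) by ring, show (1 - z) = -(z - 1) by ring,
      neg_div_neg_eq]
  -- the sequence F (closed form of q c * x^c)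
  set A : ℂ := (z-1)⁻¹ * (x*(y*z^2 + y^2*z^3 + y^3*z^4)) with hA
  set B : ℂ := (z-1)⁻¹ * (x*(y + y^2 + y^3)) with hB
  set F : ℕ → ℂ := fun c => if c = 0 then (1:ℂ)
      else A * (x*y^3*z^3)^(c-1) - B * (x*y^3)^(c-1) with hF
  have hF0 : F 0 = 1 := by simp [hF]
  have hFs : ∀ c : ℕ, F (c+1) = A * (x*y^3*z^3)^c - B * (x*y^3)^c := by
    intro c; simp [hF]
  -- the step identity
  have hstep : ∀ a : ℕ, F (a+1) = x^(a+1) * (gb (3*a+1) + gb (3*a+2) + gb (3*a+3)) := by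
    intro a
    rw [hFs, hgb, hA, hB]
    simp only []
    field_simp
    ring
  -- partial sums identity
  have hP : ∀ a : ℕ, x^a * (∑ b ∈ Finset.range (3*a+1), gb b)
      = ∑ c ∈ Finset.range (a+1), F c * x^(a-c) := by
    intro a
    induction a with
    | zero =>
      simp [hgb, hF0]
      exact hzne
    | succ a ih =>
      have h3a : 3*(a+1)+1 = ((3*a+1)+1+1)+1 := by ring
      rw [h3a, Finset.sum_range_succ, Finset.sum_range_succ, Finset.sum_range_succ,
        Finset.sum_range_succ (f := fun c => F c * x^(a+1-c)) (n := a+1)]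
      have hc : ∀ c ∈ Finset.range (a+1), F c * x^(a+1-c) = x * (F c * x^(a-c)) := by
        intro c hc
        rw [Finset.mem_range] at hc
        rw [show a+1-c = (a-c)+1 by omega]
        ring
      rw [Finset.sum_congr rfl hc, ← Finset.mul_sum, ← ih, hstep a]
      simp only [Nat.sub_self, pow_zero]
      ring
  -- the correction term
  set T2 : ℕ → ℂ := fun a => (y*(z-1))⁻¹ * ((x*y^2*z^2)^a - (x*y^2)^a) with hT2def
  have hT2 : ∀ a : ℕ, x^a * (if a = 0 then 0 else gb (2*a-1)) = T2 a := by
    intro a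
    match a with
    | 0 => simp [hT2def]
    | (a+1) =>
      rw [if_neg (Nat.succ_ne_zero a), hT2def, hgb]
      simp only []
      rw [show 2*(a+1)-1 = 2*a+1 by omega, show (2*a+1)+1 = 2*a+2 by omega]
      field_simp
      ring
  -- the filtered sum
  have hC : ∀ a : ℕ,
      (∑ b ∈ (Finset.range (3*a+1)).filter (fun b : ℕ => (b:ℤ) ≠ 2*(a:ℤ) - 1), gb b)
      = (∑ b ∈ Finset.range (3*a+1), gb b) - (if a = 0 then 0 else gb (2*a-1)) := by
    intro a
    match a with
    | 0 =>
      rw [if_pos rfl, sub_zero]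
      apply Finset.sum_congr _ (fun _ _ => rfl)
      apply Finset.filter_true_of_mem
      intro b _
      simp only [Nat.cast_zero]
      omega
    | (a+1) =>
      rw [if_neg (Nat.succ_ne_zero a), show 2*(a+1)-1 = 2*a+1 by omega]
      have hfe : (Finset.range (3*(a+1)+1)).filter (fun b : ℕ => (b:ℤ) ≠ 2*((a+1:ℕ):ℤ) - 1)
          = (Finset.range (3*(a+1)+1)).erase (2*a+1) := by
        ext b
        simp only [Finset.mem_filter, Finset.mem_erase, Finset.mem_range]
        constructor
        · rintro ⟨h1, h2⟩
          refine ⟨by omega, h1⟩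
        · rintro ⟨h1, h2⟩
          refine ⟨h2, by omega⟩
      rw [hfe, Finset.sum_erase_eq_sub (by rw [Finset.mem_range]; omega)]
  -- rewriting FpTerm
  have hterm : ∀ a : ℕ, FpTerm k S p s w a
      = (∑ c ∈ Finset.range (a+1), F c * x^(a-c)) - T2 a := by
    intro a
    have e1 : (p:ℂ)^(-(a:ℂ)*s) = x^a := by
      rw [neg_mul_comm, Complex.cpow_nat_mul, hx]
    have e2 : ∀ b : ℕ, (p:ℂ)^(-(b:ℂ)*w) * ((rstar k (p^b) : ℝ) : ℂ) = gb b := by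
      intro b
      rw [neg_mul_comm, Complex.cpow_nat_mul, ← hy, hrstar b, hgb]
    rw [FpTerm, if_neg hpS, e1,
      Finset.sum_congr rfl (fun b _ => e2 b), hC a, mul_sub, hP a, hT2 a]
  -- summability of F-norms
  have hFnorm : Summable (fun c => ‖F c‖) := by
    rw [← summable_nat_add_iff 1]
    have hle : ∀ c : ℕ, ‖F (c+1)‖ ≤ ‖A‖ * ‖x*y^3*z^3‖^c + ‖B‖ * ‖x*y^3‖^c := by
      intro c
      rw [hFs]
      refine (norm_sub_le _ _).trans ?_
      simp only [norm_mul, norm_pow]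
      exact le_refl _
    refine Summable.of_nonneg_of_le (fun c => norm_nonneg _) hle ?_
    exact ((summable_geometric_of_lt_one (norm_nonneg _) h3).mul_left _).add
      ((summable_geometric_of_lt_one (norm_nonneg _) h2).mul_left _)
  have hGnorm : Summable (fun d : ℕ => ‖x^d‖) := by
    simp only [norm_pow]
    exact summable_geometric_of_lt_one (norm_nonneg _) hnx1
  -- summability of the two pieces
  have hsum1 : Summable (fun a : ℕ => ∑ c ∈ Finset.range (a+1), F c * x^(a-c)) := by
    have := summable_norm_sum_mul_range_of_summable_norm (f := F) (g := fun d => x^d)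
      hFnorm hGnorm
    exact this.of_norm
  have hsumT2 : Summable T2 := by
    refine Summable.mul_left _ ?_
    exact (summable_geometric_of_norm_lt_one h5).sub (summable_geometric_of_norm_lt_one h4)
  have hsumFp : Summable (FpTerm k S p s w) :=
    (summable_congr hterm).mpr (hsum1.sub hsumT2)
  refine ⟨hsumFp, ?_⟩
  -- compute the tsums
  have htF : ∑' c, F c = 1 + (A * (1 - x*y^3*z^3)⁻¹ - B * (1 - x*y^3)⁻¹) := by
    rw [Summable.tsum_eq_zero_add hFnorm.of_norm, hF0]
    congr 1
    rw [tsum_congr hFs,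
      Summable.tsum_sub ((summable_geometric_of_norm_lt_one h3).mul_left _)
        ((summable_geometric_of_norm_lt_one h2).mul_left _),
      tsum_mul_left, tsum_mul_left,
      tsum_geometric_of_norm_lt_one h3, tsum_geometric_of_norm_lt_one h2]
  have htG : ∑' d : ℕ, x^d = (1 - x)⁻¹ := tsum_geometric_of_norm_lt_one hnx1
  have ht1 : ∑' a : ℕ, (∑ c ∈ Finset.range (a+1), F c * x^(a-c))
      = (1 + (A * (1 - x*y^3*z^3)⁻¹ - B * (1 - x*y^3)⁻¹)) * (1 - x)⁻¹ := by
    rw [← htF, ← htG]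
    exact (tsum_mul_tsum_eq_tsum_sum_range_of_summable_norm hFnorm hGnorm).symm
  have ht2 : ∑' a, T2 a = (y*(z-1))⁻¹ * ((1 - x*y^2*z^2)⁻¹ - (1 - x*y^2)⁻¹) := by
    rw [hT2def]
    rw [tsum_mul_left,
      (summable_geometric_of_norm_lt_one h5).tsum_sub (summable_geometric_of_norm_lt_one h4),
      tsum_geometric_of_norm_lt_one h5, tsum_geometric_of_norm_lt_one h4]
  have hFpval : Fp k S p s w
      = (1 + (A * (1 - x*y^3*z^3)⁻¹ - B * (1 - x*y^3)⁻¹)) * (1 - x)⁻¹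
        - (y*(z-1))⁻¹ * ((1 - x*y^2*z^2)⁻¹ - (1 - x*y^2)⁻¹) := by
    rw [Fp, tsum_congr hterm, Summable.tsum_sub hsum1 hsumT2, ht1, ht2]
  rw [hFpval, hA, hB]
  have d1 : (1:ℂ) - x ≠ 0 := hne _ hnx1
  have d2 : (1:ℂ) - x*y^3 ≠ 0 := hne _ h2
  have d3 : (1:ℂ) - x*y^3*z^3 ≠ 0 := hne _ h3
  have d4 : (1:ℂ) - x*y^2 ≠ 0 := hne _ h4
  have d5 : (1:ℂ) - x*y^2*z^2 ≠ 0 := hne _ h5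
  clear_value A B F gb T2
  clear * - hy0 hzne d1 d2 d3 d4 d5
  have d3' : (1:ℂ) - z^3*x*y^3 ≠ 0 := by rw [show z^3*x*y^3 = x*y^3*z^3 by ring]; exact d3
  have d5' : (1:ℂ) - z^2*x*y^2 ≠ 0 := by rw [show z^2*x*y^2 = x*y^2*z^2 by ring]; exact d5
  field_simp
  ring
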